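/- For any real ν ≥ 1 and every ε > 0, the number of positive integers n ≤ X^ν whose squarefree kernel n* = ∏_{p|n} p satisfies n* ≤ X is O(X^{1+ε}), with implied constant depending on ν and ε. -/

import Mathlib

open Real
open scoped BigOperators

private lemma geom_finset_sum_le' {x : ℝ} (hx0 : 0 ≤ x) (hx1 : x < 1) (F : Finset ℕ) :
    ∑ e ∈ F, x ^ e ≤ (1 - x)⁻¹ := by
  have : ∑ e ∈ F, x ^ e ≤ ∑' e : ℕ, x ^ e :=
    Summable.sum_le_tsum F (fun i _ => pow_nonneg hx0 i) (summable_geometric_of_lt_one hx0 hx1)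
  rwa [tsum_geometric_of_lt_one hx0 hx1] at this

private lemma euler_bound' {δ : ℝ} (hδ : 0 < δ) (P : Finset ℕ) (hP : ∀ p ∈ P, p.Prime)
    (s : Finset ℕ) (hs : ∀ n ∈ s, 0 < n ∧ n.primeFactors ⊆ P) :
    ∑ n ∈ s, (n : ℝ) ^ (-δ) ≤ ∏ p ∈ P, (1 - (p : ℝ) ^ (-δ))⁻¹ := by
  induction P using Finset.induction_on generalizing s with
  | empty =>
      have hsub : s ⊆ {1} := by
        intro n hn
        obtain ⟨hn0, hnP⟩ := hs n hn
        have : n.primeFactors = ∅ := Finset.subset_empty.mp hnP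
        rcases Nat.primeFactors_eq_empty.mp this with h | h
        · omega
        · simp [h]
      calc ∑ n ∈ s, (n : ℝ) ^ (-δ) ≤ ∑ n ∈ ({1} : Finset ℕ), (n : ℝ) ^ (-δ) := by
            refine Finset.sum_le_sum_of_subset_of_nonneg hsub fun i _ _ => ?_
            exact Real.rpow_nonneg (Nat.cast_nonneg i) _
        _ = 1 := by simp
        _ = ∏ p ∈ (∅ : Finset ℕ), (1 - (p : ℝ) ^ (-δ))⁻¹ := by simp
  | @insert p P hpP ih =>
      have hp : p.Prime := hP p (Finset.mem_insert_self p P)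
      have hP' : ∀ q ∈ P, q.Prime := fun q hq => hP q (Finset.mem_insert_of_mem hq)
      set x : ℝ := (p : ℝ) ^ (-δ) with hxdef
      have hx0 : 0 ≤ x := Real.rpow_nonneg (Nat.cast_nonneg p) _
      have hx1 : x < 1 := by
        apply Real.rpow_lt_one_of_one_lt_of_neg
        · exact_mod_cast hp.one_lt
        · linarith
      have hinv0 : (0:ℝ) ≤ (1 - x)⁻¹ := inv_nonneg.mpr (by linarith)
      set φ : ℕ → ℕ := fun n => ordCompl[p] n with hφdef
      set t := s.image φ with htdef
      have hmaps : ∀ n ∈ s, φ n ∈ t := fun n hn => Finset.mem_image_of_mem φ hn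
      rw [← Finset.sum_fiberwise_of_maps_to hmaps (fun n => (n : ℝ) ^ (-δ))]
      have hkey : ∀ n ∈ s, n = p ^ (n.factorization p) * φ n := fun n hn =>
        (Nat.ordProj_mul_ordCompl_eq_self n p).symm
      have hinner : ∀ m ∈ t, ∑ n ∈ s.filter (fun n => φ n = m), (n : ℝ) ^ (-δ)
          ≤ (1 - x)⁻¹ * (m : ℝ) ^ (-δ) := by
        intro m hm
        have hm0 : (0:ℝ) ≤ (m : ℝ) ^ (-δ) := Real.rpow_nonneg (Nat.cast_nonneg m) _
        have hstep : ∑ n ∈ s.filter (fun n => φ n = m), (n : ℝ) ^ (-δ)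
            = ∑ n ∈ s.filter (fun n => φ n = m), x ^ (n.factorization p) * (m : ℝ) ^ (-δ) := by
          refine Finset.sum_congr rfl fun n hn => ?_
          obtain ⟨hns, hφn⟩ := Finset.mem_filter.mp hn
          have hn' : n = p ^ (n.factorization p) * m := by rw [← hφn]; exact hkey n hns
          conv_lhs => rw [hn']
          push_cast
          rw [Real.mul_rpow (by positivity) (Nat.cast_nonneg m), ← Real.rpow_natCast (p:ℝ),
            ← Real.rpow_mul (Nat.cast_nonneg p), mul_comm ((n.factorization p : ℕ) : ℝ) (-δ),
            Real.rpow_mul (Nat.cast_nonneg p), Real.rpow_natCast]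
        rw [hstep, ← Finset.sum_mul]
        refine mul_le_mul_of_nonneg_right ?_ hm0
        have hinj : ∀ a ∈ s.filter (fun n => φ n = m), ∀ b ∈ s.filter (fun n => φ n = m),
            a.factorization p = b.factorization p → a = b := by
          intro a ha b hb hab
          obtain ⟨has, hφa⟩ := Finset.mem_filter.mp ha
          obtain ⟨hbs, hφb⟩ := Finset.mem_filter.mp hb
          have h1 : a = p ^ (a.factorization p) * m := by rw [← hφa]; exact hkey a has
          have h2 : b = p ^ (b.factorization p) * m := by rw [← hφb]; exact hkey b hbs
          rw [h1, h2, hab]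
        calc ∑ n ∈ s.filter (fun n => φ n = m), x ^ (n.factorization p)
            = ∑ E ∈ (s.filter (fun n => φ n = m)).image (fun n => n.factorization p), x ^ E :=
              (Finset.sum_image hinj).symm
          _ ≤ (1 - x)⁻¹ := geom_finset_sum_le' hx0 hx1 _
      calc ∑ m ∈ t, ∑ n ∈ s.filter (fun n => φ n = m), (n : ℝ) ^ (-δ)
          ≤ ∑ m ∈ t, (1 - x)⁻¹ * (m : ℝ) ^ (-δ) := Finset.sum_le_sum hinner
        _ = (1 - x)⁻¹ * ∑ m ∈ t, (m : ℝ) ^ (-δ) := by rw [Finset.mul_sum]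
        _ ≤ (1 - x)⁻¹ * ∏ q ∈ P, (1 - (q : ℝ) ^ (-δ))⁻¹ := by
            refine mul_le_mul_of_nonneg_left (ih hP' t ?_) hinv0
            intro m hm
            obtain ⟨n, hn, rfl⟩ := Finset.mem_image.mp hm
            obtain ⟨hn0, hnP⟩ := hs n hn
            refine ⟨Nat.ordCompl_pos p hn0.ne', ?_⟩
            intro q hq
            have hq' : q ∈ n.primeFactors :=
              Nat.primeFactors_mono (Nat.ordCompl_dvd n p) hn0.ne' hq
            have hqp : q ≠ p := by
              rintro rfl
              exact (Nat.not_dvd_ordCompl hp hn0.ne') (Nat.dvd_of_mem_primeFactors hq)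
            rcases Finset.mem_insert.mp (hnP hq') with h | h
            · exact absurd h hqp
            · exact h
        _ = ∏ q ∈ insert p P, (1 - (q : ℝ) ^ (-δ))⁻¹ := by
            rw [Finset.prod_insert hpP]

private lemma fiber_bound' {δ : ℝ} (hδ : 0 < δ) {Y : ℝ} (hY : 1 ≤ Y)
    (P : Finset ℕ) (hP : ∀ p ∈ P, p.Prime) (s : Finset ℕ)
    (hs : ∀ n ∈ s, 0 < n ∧ (n : ℝ) ≤ Y ∧ n.primeFactors ⊆ P) :
    (s.card : ℝ) ≤ Y ^ δ * ∏ p ∈ P, (1 - (p : ℝ) ^ (-δ))⁻¹ := by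
  have hY0 : (0:ℝ) ≤ Y := by linarith
  have euler : ∑ n ∈ s, (n : ℝ) ^ (-δ) ≤ ∏ p ∈ P, (1 - (p : ℝ) ^ (-δ))⁻¹ :=
    euler_bound' hδ P hP s (fun n hn => ⟨(hs n hn).1, (hs n hn).2.2⟩)
  have h2 : ∀ n ∈ s, (1:ℝ) ≤ Y ^ δ * (n : ℝ) ^ (-δ) := by
    intro n hn
    obtain ⟨hn0, hnY, -⟩ := hs n hn
    have hn0' : (0:ℝ) < n := by exact_mod_cast hn0
    have h1 : (1:ℝ) ≤ (Y / n) ^ δ :=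
      Real.one_le_rpow (by rw [le_div_iff₀ hn0']; linarith) hδ.le
    rwa [Real.div_rpow hY0 hn0'.le, div_eq_mul_inv, ← Real.rpow_neg hn0'.le] at h1
  calc (s.card : ℝ) = ∑ _n ∈ s, (1:ℝ) := by simp
    _ ≤ ∑ n ∈ s, Y ^ δ * (n : ℝ) ^ (-δ) := Finset.sum_le_sum h2
    _ = Y ^ δ * ∑ n ∈ s, (n : ℝ) ^ (-δ) := by rw [Finset.mul_sum]
    _ ≤ Y ^ δ * ∏ p ∈ P, (1 - (p : ℝ) ^ (-δ))⁻¹ :=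
        mul_le_mul_of_nonneg_left euler (Real.rpow_nonneg hY0 δ)

private lemma prod_le_exp' {δ : ℝ} (hδ : 0 < δ) (P : Finset ℕ) (hP : ∀ p ∈ P, p.Prime) :
    ∏ p ∈ P, (1 - (p : ℝ) ^ (-δ))⁻¹
      ≤ Real.exp ((1 - (2:ℝ) ^ (-δ))⁻¹ * ∑ p ∈ P, (p : ℝ) ^ (-δ)) := by
  set c : ℝ := (1 - (2:ℝ) ^ (-δ))⁻¹ with hcdef
  have hx₀ : (2:ℝ) ^ (-δ) < 1 :=
    Real.rpow_lt_one_of_one_lt_of_neg one_lt_two (by linarith)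
  have hx₀0 : (0:ℝ) < (2:ℝ) ^ (-δ) := Real.rpow_pos_of_pos two_pos _
  have hc1 : 1 ≤ c * (1 - (2:ℝ)^(-δ)) := by
    rw [hcdef, inv_mul_cancel₀ (by linarith)]
  have hc0 : 0 < c := by rw [hcdef]; exact inv_pos.2 (by linarith)
  rw [mul_comm, Finset.sum_mul, Real.exp_sum]
  refine Finset.prod_le_prod (fun p hp => inv_nonneg.2 ?_) (fun p hp => ?_)
  · have : (p:ℝ) ^ (-δ) ≤ (2:ℝ) ^ (-δ) :=
      Real.rpow_le_rpow_of_nonpos two_pos (by exact_mod_cast (hP p hp).two_le) (by linarith)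
    linarith
  · have hple : (p:ℝ) ^ (-δ) ≤ (2:ℝ) ^ (-δ) :=
      Real.rpow_le_rpow_of_nonpos two_pos (by exact_mod_cast (hP p hp).two_le) (by linarith)
    have hp0 : (0:ℝ) < (p:ℝ) ^ (-δ) :=
      Real.rpow_pos_of_pos (by exact_mod_cast (hP p hp).pos) _
    set x : ℝ := (p:ℝ) ^ (-δ)
    have h1x : 0 < 1 - x := by linarith
    have hcx : c * x ≤ c * ((2:ℝ)^(-δ)) := mul_le_mul_of_nonneg_left hple hc0.le
    have key : 1 ≤ (1 + c * x) * (1 - x) := by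
      nlinarith [mul_nonneg hp0.le (by nlinarith : (0:ℝ) ≤ c - 1 - c * x)]
    have step1 : (1 - x)⁻¹ ≤ 1 + c * x := by
      rw [inv_le_iff_one_le_mul₀' h1x]
      linarith [key]
    calc (1 - x)⁻¹ ≤ 1 + c * x := step1
      _ ≤ Real.exp (x * c) := by
          rw [mul_comm x c]
          linarith [Real.add_one_le_exp (c * x)]

private lemma sum_rpow_bound' {δ : ℝ} (hδ : 0 < δ) (P : Finset ℕ) (hP : ∀ p ∈ P, p.Prime)
    {B : ℝ} (hB : 1 ≤ B) :
    ∑ p ∈ P, (p : ℝ) ^ (-δ) ≤ B + (P.card : ℝ) * B ^ (-δ) := by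
  classical
  have hB0 : (0:ℝ) < B := by linarith
  set q : ℕ → Prop := fun p => (p:ℝ) ≤ B with hqdef
  rw [← Finset.sum_filter_add_sum_filter_not P q]
  have part1 : ∑ p ∈ P.filter q, (p : ℝ) ^ (-δ) ≤ B := by
    calc ∑ p ∈ P.filter q, (p : ℝ) ^ (-δ)
        ≤ ∑ _p ∈ P.filter q, (1:ℝ) := by
          refine Finset.sum_le_sum fun p hp => ?_
          have hp1 : (1:ℝ) ≤ (p:ℝ) := by
            exact_mod_cast (hP p (Finset.mem_filter.mp hp).1).one_lt.le
          exact Real.rpow_le_one_of_one_le_of_nonpos hp1 (by linarith)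
      _ = ((P.filter q).card : ℝ) := by simp
      _ ≤ ((Finset.Icc 1 ⌊B⌋₊).card : ℝ) := by
          have hsub : P.filter q ⊆ Finset.Icc 1 ⌊B⌋₊ := by
            intro p hp
            obtain ⟨hpP, hpB⟩ := Finset.mem_filter.mp hp
            exact Finset.mem_Icc.mpr ⟨(hP p hpP).one_lt.le, Nat.le_floor hpB⟩
          exact_mod_cast Finset.card_le_card hsub
      _ ≤ B := by
          rw [Nat.card_Icc]
          simpa using Nat.floor_le hB0.le
  have part2 : ∑ p ∈ P.filter (fun p => ¬ q p), (p : ℝ) ^ (-δ)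
      ≤ (P.card : ℝ) * B ^ (-δ) := by
    calc ∑ p ∈ P.filter (fun p => ¬ q p), (p : ℝ) ^ (-δ)
        ≤ ∑ _p ∈ P.filter (fun p => ¬ q p), B ^ (-δ) := by
          refine Finset.sum_le_sum fun p hp => ?_
          have hpB : B < (p:ℝ) := lt_of_not_ge (Finset.mem_filter.mp hp).2
          exact Real.rpow_le_rpow_of_nonpos hB0 hpB.le (by linarith)
      _ = ((P.filter (fun p => ¬ q p)).card : ℝ) * B ^ (-δ) := by
          rw [Finset.sum_const, nsmul_eq_mul]
      _ ≤ (P.card : ℝ) * B ^ (-δ) := by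
          refine mul_le_mul_of_nonneg_right ?_ (Real.rpow_nonneg hB0.le _)
          exact_mod_cast Finset.card_filter_le _ _
  linarith

private lemma card_primes_le' {X : ℝ} (hX : 1 ≤ X) (P : Finset ℕ) (hP : ∀ p ∈ P, p.Prime)
    (hprod : ((∏ p ∈ P, p : ℕ) : ℝ) ≤ X) :
    (P.card : ℝ) ≤ Real.log X / Real.log 2 := by
  have h2 : ((2:ℕ) ^ P.card : ℕ) ≤ (∏ p ∈ P, p : ℕ) :=
    Finset.pow_card_le_prod P _ _ (fun p hp => (hP p hp).two_le)
  have h2' : (2:ℝ) ^ (P.card : ℕ) ≤ X := by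
    calc ((2:ℝ)) ^ (P.card : ℕ) = (((2:ℕ) ^ P.card : ℕ) : ℝ) := by push_cast; ring
      _ ≤ ((∏ p ∈ P, p : ℕ) : ℝ) := by exact_mod_cast h2
      _ ≤ X := hprod
  have hlog : (P.card : ℝ) * Real.log 2 ≤ Real.log X := by
    have := Real.log_le_log (by positivity) h2'
    rwa [Real.log_pow] at this
  rw [le_div_iff₀ (Real.log_pos one_lt_two)]
  linarith

private lemma rpow_linear_bound' {c₂ γ ε' : ℝ} (hc : 0 < c₂) (hγ0 : 0 < γ) (hγ1 : γ < 1)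
    (hε : 0 < ε') :
    ∃ A : ℝ, 0 ≤ A ∧ ∀ s : ℝ, 1 ≤ s → c₂ * s ^ γ ≤ A + ε' * s := by
  set T₀ : ℝ := max 1 ((c₂ / ε') ^ (1 / (1 - γ))) with hT₀def
  have hT₀1 : (1:ℝ) ≤ T₀ := le_max_left _ _
  have hT₀0 : (0:ℝ) < T₀ := by linarith
  refine ⟨c₂ * T₀ ^ γ, by positivity, ?_⟩
  intro s hs
  have hs0 : (0:ℝ) < s := by linarith
  rcases le_or_gt s T₀ with h | h
  · have h1 : s ^ γ ≤ T₀ ^ γ := Real.rpow_le_rpow hs0.le h hγ0.le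
    nlinarith [mul_pos hε hs0]
  · have h1 : s ^ γ = s * s ^ (γ - 1) := by
      rw [← Real.rpow_one_add' hs0.le (by intro hh; simp at hh; linarith)]
      ring_nf
    have h2 : s ^ (γ - 1) ≤ T₀ ^ (γ - 1) :=
      Real.rpow_le_rpow_of_nonpos hT₀0 h.le (by linarith)
    have hcd : (0:ℝ) < c₂ / ε' := by positivity
    have h3 : T₀ ^ (γ - 1) ≤ ((c₂ / ε') ^ (1 / (1 - γ))) ^ (γ - 1) :=
      Real.rpow_le_rpow_of_nonpos (Real.rpow_pos_of_pos hcd _) (le_max_right _ _) (by linarith)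
    have h4 : ((c₂ / ε') ^ (1 / (1 - γ))) ^ (γ - 1) = ε' / c₂ := by
      rw [← Real.rpow_mul hcd.le]
      have hne : (1:ℝ) - γ ≠ 0 := by linarith
      have hexp : 1 / (1 - γ) * (γ - 1) = -1 := by
        field_simp
        ring
      rw [hexp, Real.rpow_neg_one, inv_div]
    have h5 : s ^ (γ - 1) ≤ ε' / c₂ := by
      calc s ^ (γ - 1) ≤ T₀ ^ (γ - 1) := h2
        _ ≤ ((c₂ / ε') ^ (1 / (1 - γ))) ^ (γ - 1) := h3
        _ = ε' / c₂ := h4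
    have h6 : c₂ * s ^ γ ≤ ε' * s := by
      rw [h1, ← mul_assoc]
      calc c₂ * s * s ^ (γ - 1) ≤ c₂ * s * (ε' / c₂) :=
            mul_le_mul_of_nonneg_left h5 (by positivity)
        _ = ε' * s := by field_simp
    have hA : 0 ≤ c₂ * T₀ ^ γ := by positivity
    linarith

set_option maxHeartbeats 1000000 in
/-- The number of `n ≤ X^ν` whose squarefree kernel `∏_{p|n} p` is at most `X`
is `O(X^(1+ε))`. -/
theorem stmt_16 (ν : ℝ) (hν : 1 ≤ ν) (ε : ℝ) (hε : 0 < ε) :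
    ∃ C : ℝ, 0 < C ∧ ∀ X : ℝ, 1 ≤ X →
      (Nat.card {n : ℕ | 0 < n ∧ (n : ℝ) ≤ X ^ ν ∧
          ((∏ p ∈ n.primeFactors, p : ℕ) : ℝ) ≤ X} : ℝ)
        ≤ C * X ^ (1 + ε) := by
  classical
  have hν0 : (0:ℝ) < ν := by linarith
  set δ : ℝ := ε / (2 * ν) with hδdef
  have hδ : 0 < δ := div_pos hε (by linarith)
  set γ : ℝ := 1 / (1 + δ) with hγdef
  have hγ0 : 0 < γ := by positivity
  have hγ1 : γ < 1 := by
    rw [hγdef, div_lt_one (by linarith)]; linarith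
  have hγeq : γ * (1 + δ) = 1 := by
    rw [hγdef]; field_simp
  set c : ℝ := (1 - (2:ℝ) ^ (-δ))⁻¹ with hcdef
  have hx₀ : (2:ℝ) ^ (-δ) < 1 :=
    Real.rpow_lt_one_of_one_lt_of_neg one_lt_two (by linarith)
  have hc0 : 0 < c := by rw [hcdef]; exact inv_pos.2 (by linarith)
  have hlog2 : 0 < Real.log 2 := Real.log_pos one_lt_two
  set c₂ : ℝ := c * (1 + 1 / Real.log 2) with hc₂def
  have hc₂ : 0 < c₂ := by
    apply mul_pos hc0; positivity
  obtain ⟨A, hA0, hA⟩ := rpow_linear_bound' hc₂ hγ0 hγ1 (show (0:ℝ) < ε/4 by linarith)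
  refine ⟨Real.exp (A + ε/4), Real.exp_pos _, ?_⟩
  intro X hX
  have hX0 : (0:ℝ) < X := by linarith
  set Y : ℝ := X ^ ν with hYdef
  have hY1 : 1 ≤ Y := Real.one_le_rpow hX (by linarith)
  have hY0 : (0:ℝ) ≤ Y := by linarith
  set t : ℝ := Real.log X with htdef
  have ht0 : 0 ≤ t := Real.log_nonneg hX
  set B : ℝ := (1 + t) ^ γ with hBdef
  have hB1 : 1 ≤ B := Real.one_le_rpow (by linarith) hγ0.le
  set R : ℕ → ℕ := fun n => ∏ p ∈ n.primeFactors, p with hRdef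
  set T : Finset ℕ := (Finset.Icc 1 ⌊Y⌋₊).filter (fun n => ((R n : ℕ) : ℝ) ≤ X) with hTdef
  -- identify the set with the finset
  have hset : {n : ℕ | 0 < n ∧ (n : ℝ) ≤ Y ∧ ((∏ p ∈ n.primeFactors, p : ℕ) : ℝ) ≤ X}
      = (↑T : Set ℕ) := by
    ext n
    simp only [Set.mem_setOf_eq, hTdef, Finset.coe_filter, Finset.mem_Icc]
    constructor
    · rintro ⟨h1, h2, h3⟩
      exact ⟨⟨h1, Nat.le_floor h2⟩, h3⟩
    · rintro ⟨⟨h1, h2⟩, h3⟩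
      refine ⟨h1, ?_, h3⟩
      calc (n:ℝ) ≤ (⌊Y⌋₊ : ℝ) := by exact_mod_cast h2
        _ ≤ Y := Nat.floor_le hY0
  have hcard : (Nat.card {n : ℕ | 0 < n ∧ (n : ℝ) ≤ Y ∧
      ((∏ p ∈ n.primeFactors, p : ℕ) : ℝ) ≤ X} : ℝ) = (T.card : ℝ) := by
    rw [hset, Nat.card_coe_set_eq, Set.ncard_coe_finset]
  rw [hcard]
  -- fiber decomposition by radical
  have hmaps : ∀ n ∈ T, R n ∈ Finset.Icc 1 ⌊X⌋₊ := by
    intro n hn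
    obtain ⟨hn1, hnrad⟩ := Finset.mem_filter.mp hn
    refine Finset.mem_Icc.mpr ⟨?_, Nat.le_floor hnrad⟩
    exact Finset.prod_pos fun p hp => (Nat.prime_of_mem_primeFactors hp).pos
  have hdecomp : T.card = ∑ r ∈ Finset.Icc 1 ⌊X⌋₊, (T.filter (fun n => R n = r)).card :=
    Finset.card_eq_sum_card_fiberwise hmaps
  set U : ℝ := X ^ (ε/2) * Real.exp (c₂ * (1 + t) ^ γ) with hUdef
  have hYδ : Y ^ δ = X ^ (ε/2) := by
    rw [hYdef, ← Real.rpow_mul hX0.le]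
    congr 1
    rw [hδdef]; field_simp
  have hfiber : ∀ r ∈ Finset.Icc 1 ⌊X⌋₊,
      ((T.filter (fun n => R n = r)).card : ℝ) ≤ U := by
    intro r _
    have hU0 : 0 ≤ U := by
      rw [hUdef]; positivity
    rcases Finset.eq_empty_or_nonempty (T.filter (fun n => R n = r)) with he | ⟨n₀, hn₀⟩
    · rw [he]; simpa using hU0
    · obtain ⟨hn₀T, hn₀r⟩ := Finset.mem_filter.mp hn₀
      set P : Finset ℕ := n₀.primeFactors with hPdef
      have hPprime : ∀ p ∈ P, p.Prime := fun p hp => Nat.prime_of_mem_primeFactors hp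
      have hprodP : ((∏ p ∈ P, p : ℕ) : ℝ) ≤ X := by
        rw [hPdef]
        exact (Finset.mem_filter.mp hn₀T).2
      have hmem : ∀ n ∈ T.filter (fun n => R n = r),
          0 < n ∧ (n : ℝ) ≤ Y ∧ n.primeFactors ⊆ P := by
        intro n hn
        obtain ⟨hnT, hnr⟩ := Finset.mem_filter.mp hn
        obtain ⟨hn1, _⟩ := Finset.mem_filter.mp hnT
        obtain ⟨hn1', hn2'⟩ := Finset.mem_Icc.mp hn1
        have hn0 : 0 < n := hn1'
        have hnY : (n:ℝ) ≤ Y := by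
          calc (n:ℝ) ≤ (⌊Y⌋₊ : ℝ) := by exact_mod_cast hn2'
            _ ≤ Y := Nat.floor_le hY0
        refine ⟨hn0, hnY, ?_⟩
        have e1 : n.primeFactors = r.primeFactors := by
          rw [← hnr, hRdef]
          exact (Nat.primeFactors_prod (fun p hp => Nat.prime_of_mem_primeFactors hp)).symm
        have e2 : P = r.primeFactors := by
          rw [hPdef, ← hn₀r, hRdef]
          exact (Nat.primeFactors_prod (fun p hp => Nat.prime_of_mem_primeFactors hp)).symm
        rw [e1, e2]
      have step1 : ((T.filter (fun n => R n = r)).card : ℝ)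
          ≤ Y ^ δ * ∏ p ∈ P, (1 - (p : ℝ) ^ (-δ))⁻¹ :=
        fiber_bound' hδ hY1 P hPprime _ hmem
      have step2 : ∏ p ∈ P, (1 - (p : ℝ) ^ (-δ))⁻¹
          ≤ Real.exp (c * ∑ p ∈ P, (p : ℝ) ^ (-δ)) := prod_le_exp' hδ P hPprime
      have hsum : ∑ p ∈ P, (p : ℝ) ^ (-δ) ≤ B + (t / Real.log 2) * B ^ (-δ) := by
        have s1 : ∑ p ∈ P, (p : ℝ) ^ (-δ) ≤ B + (P.card : ℝ) * B ^ (-δ) :=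
          sum_rpow_bound' hδ P hPprime hB1
        have s2 : (P.card : ℝ) ≤ t / Real.log 2 := card_primes_le' hX P hPprime hprodP
        have s3 : (0:ℝ) ≤ B ^ (-δ) := Real.rpow_nonneg (by linarith) _
        nlinarith [mul_le_mul_of_nonneg_right s2 s3]
      have hBneg : B ^ (-δ) = (1 + t) ^ (γ * (-δ)) := by
        rw [hBdef, ← Real.rpow_mul (by linarith)]
      have h9 : (1 + t) * (1 + t) ^ (γ * (-δ)) = (1 + t) ^ γ := by
        rw [← Real.rpow_one_add' (by linarith) ?hne]
        · congr 1
          nlinarith [hγeq]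
        · intro hh
          nlinarith [hγeq, hδ, ht0]
      have hq : (t / Real.log 2) * B ^ (-δ) ≤ (1 / Real.log 2) * (1 + t) ^ γ := by
        rw [hBneg]
        have h8 : t * (1 + t) ^ (γ * (-δ)) ≤ (1 + t) * (1 + t) ^ (γ * (-δ)) :=
          mul_le_mul_of_nonneg_right (by linarith) (Real.rpow_nonneg (by linarith) _)
        calc (t / Real.log 2) * (1 + t) ^ (γ * (-δ))
            = (t * (1 + t) ^ (γ * (-δ))) / Real.log 2 := by ring
          _ ≤ ((1 + t) * (1 + t) ^ (γ * (-δ))) / Real.log 2 := by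
              exact (div_le_div_iff_of_pos_right hlog2).mpr h8
          _ = (1 / Real.log 2) * (1 + t) ^ γ := by rw [h9]; ring
      have hcsum : c * ∑ p ∈ P, (p : ℝ) ^ (-δ) ≤ c₂ * (1 + t) ^ γ := by
        have : ∑ p ∈ P, (p : ℝ) ^ (-δ) ≤ (1 + t) ^ γ + (1 / Real.log 2) * (1 + t) ^ γ := by
          have : B = (1 + t) ^ γ := hBdef
          linarith [hsum, hq]
        calc c * ∑ p ∈ P, (p : ℝ) ^ (-δ)
            ≤ c * ((1 + t) ^ γ + (1 / Real.log 2) * (1 + t) ^ γ) :=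
              mul_le_mul_of_nonneg_left this hc0.le
          _ = c₂ * (1 + t) ^ γ := by rw [hc₂def]; ring
      calc ((T.filter (fun n => R n = r)).card : ℝ)
          ≤ Y ^ δ * ∏ p ∈ P, (1 - (p : ℝ) ^ (-δ))⁻¹ := step1
        _ ≤ Y ^ δ * Real.exp (c * ∑ p ∈ P, (p : ℝ) ^ (-δ)) :=
            mul_le_mul_of_nonneg_left step2 (Real.rpow_nonneg hY0 _)
        _ ≤ Y ^ δ * Real.exp (c₂ * (1 + t) ^ γ) :=
            mul_le_mul_of_nonneg_left (Real.exp_le_exp.mpr hcsum) (Real.rpow_nonneg hY0 _)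
        _ = U := by rw [hUdef, hYδ]
  -- total
  have htotal : (T.card : ℝ) ≤ X * U := by
    have h1 : (T.card : ℝ) ≤ ∑ r ∈ Finset.Icc 1 ⌊X⌋₊, U := by
      rw [hdecomp]
      push_cast
      exact Finset.sum_le_sum hfiber
    have h2 : ∑ r ∈ Finset.Icc 1 ⌊X⌋₊, U = (⌊X⌋₊ : ℝ) * U := by
      rw [Finset.sum_const, nsmul_eq_mul, Nat.card_Icc]
      simp
    have hU0 : 0 ≤ U := by rw [hUdef]; positivity
    have h3 : (⌊X⌋₊ : ℝ) ≤ X := Nat.floor_le hX0.le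
    calc (T.card : ℝ) ≤ (⌊X⌋₊ : ℝ) * U := by rw [← h2]; exact h1
      _ ≤ X * U := mul_le_mul_of_nonneg_right h3 hU0
  -- final estimate
  have hexp : Real.exp (c₂ * (1 + t) ^ γ) ≤ Real.exp (A + ε/4) * X ^ (ε/4) := by
    have h1 : c₂ * (1 + t) ^ γ ≤ A + (ε/4) * (1 + t) := hA (1 + t) (by linarith)
    have h2 : Real.exp (c₂ * (1 + t) ^ γ) ≤ Real.exp (A + ε/4 + (ε/4) * t) := by
      apply Real.exp_le_exp.mpr
      nlinarith
    have h3 : Real.exp (A + ε/4 + (ε/4) * t) = Real.exp (A + ε/4) * X ^ (ε/4) := by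
      rw [Real.exp_add]
      congr 1
      rw [Real.rpow_def_of_pos hX0, mul_comm]
    rw [← h3]; exact h2
  calc (T.card : ℝ) ≤ X * U := htotal
    _ = X * X ^ (ε/2) * Real.exp (c₂ * (1 + t) ^ γ) := by rw [hUdef]; ring
    _ ≤ X * X ^ (ε/2) * (Real.exp (A + ε/4) * X ^ (ε/4)) := by
        apply mul_le_mul_of_nonneg_left hexp (by positivity)
    _ = Real.exp (A + ε/4) * (X * X ^ (ε/2) * X ^ (ε/4)) := by ring
    _ = Real.exp (A + ε/4) * X ^ (1 + 3*ε/4) := by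
        congr 1
        rw [show (1 + 3*ε/4 : ℝ) = 1 + ε/2 + ε/4 by ring, Real.rpow_add hX0,
          Real.rpow_add hX0, Real.rpow_one]
    _ ≤ Real.exp (A + ε/4) * X ^ (1 + ε) := by
        apply mul_le_mul_of_nonneg_left _ (Real.exp_pos _).le
        exact Real.rpow_le_rpow_of_exponent_le hX (by linarith)
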